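/- A Schurian Λ-module M forms a forward hom-orthogonal sequence of length 1 if and only if M is simple. -/

import Mathlib

variable (Λ : Type) [Ring Λ]

/-- A module is Schurian if its endomorphism ring is a division ring:
it is nonzero and every nonzero endomorphism is invertible. -/
def Schurian (M : ModuleCat.{0} Λ) : Prop :=
  Nontrivial M ∧ ∀ f : M ⟶ M, f = 0 ∨ Function.Bijective f

/-- The torsion class `G(M) = ^⊥(M^⊥)` generated by `M` inside the category
of finite-length `Λ`-modules. -/
def torsionClassOf (M : ModuleCat.{0} Λ) : Set (ModuleCat.{0} Λ) :=
  {N | ∀ P : ModuleCat.{0} Λ, IsFiniteLength Λ P →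
    (∀ f : M ⟶ P, f = 0) → ∀ g : N ⟶ P, g = 0}

/-- `X` can be inserted into the sequence `M` at position `k` (after the first `k`
terms) preserving forward hom-orthogonality. -/
def Insertable {m : ℕ} (M : Fin m → ModuleCat.{0} Λ) (X : ModuleCat.{0} Λ)
    (k : ℕ) : Prop :=
  ∀ i : Fin m, ((i : ℕ) < k → ∀ f : M i ⟶ X, f = 0) ∧
    (k ≤ (i : ℕ) → ∀ f : X ⟶ M i, f = 0)

/-- A forward hom-orthogonal sequence: a sequence of Schurian (finite-length)
modules `M_1, ..., M_m` with `Hom(M_i, M_j) = 0` for `i < j`, such that no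
Schurian module `X` lying in the torsion class `G(M_1 ⊕ ⋯ ⊕ M_m)` can be
inserted anywhere into the sequence preserving condition (1). -/
def ForwardHomOrthogonal (m : ℕ) (M : Fin m → ModuleCat.{0} Λ) : Prop :=
  (∀ i, IsFiniteLength Λ (M i)) ∧ (∀ i, Schurian Λ (M i)) ∧
  (∀ i j : Fin m, i < j → ∀ f : M i ⟶ M j, f = 0) ∧
  ¬ ∃ X : ModuleCat.{0} Λ, IsFiniteLength Λ X ∧ Schurian Λ X ∧
      X ∈ torsionClassOf Λ (ModuleCat.of Λ (∀ i, M i)) ∧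
      ∃ k ≤ m, Insertable Λ M X k

/-- A simple module has finite length. -/
lemma aux_simple_fl (S : Type) [AddCommGroup S] [Module Λ S] [IsSimpleModule Λ S] :
    IsFiniteLength Λ S := by
  rw [isFiniteLength_iff_isNoetherian_isArtinian]
  constructor <;> infer_instance

/-- A nontrivial finite-length module has a coatomic (maximal) submodule. -/
lemma aux_exists_coatom (N : Type) [AddCommGroup N] [Module Λ N] [Nontrivial N]
    (h : IsFiniteLength Λ N) : ∃ m : Submodule Λ N, IsCoatom m := by
  rw [isFiniteLength_iff_isNoetherian_isArtinian] at h
  have : IsNoetherian Λ N := h.1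
  have : IsCoatomic (Submodule Λ N) :=
    isCoatomic_of_orderTop_gt_wellFounded (wellFounded_gt (α := Submodule Λ N))
  exact IsCoatomic.exists_coatom _

/-- If all homs from `M` to `P` vanish, so do homs from the one-fold product. -/
lemma aux_pi_hom (M : ModuleCat.{0} Λ) (P : Type) [AddCommGroup P] [Module Λ P]
    (h : ∀ f : M →ₗ[Λ] P, f = 0)
    (f : (∀ _ : Fin 1, M) →ₗ[Λ] P) : f = 0 := by
  refine LinearMap.ext fun x => ?_
  have hx : x = fun _ => x 0 := funext fun i => by rw [Subsingleton.elim i 0]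
  have h0 := h (f.comp (LinearMap.pi fun _ : Fin 1 => LinearMap.id))
  calc f x = f (fun _ => x 0) := by rw [← hx]
    _ = (f.comp (LinearMap.pi fun _ : Fin 1 => LinearMap.id)) (x 0) := rfl
    _ = 0 := by rw [h0]; rfl

/-- Conversely, if all homs from the one-fold product to `P` vanish,
so do homs from `M`. -/
lemma aux_hom_of_pi (M : ModuleCat.{0} Λ) (P : Type) [AddCommGroup P] [Module Λ P]
    (h : ∀ f : (∀ _ : Fin 1, M) →ₗ[Λ] P, f = 0)
    (f : M →ₗ[Λ] P) : f = 0 := by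
  refine LinearMap.ext fun m => ?_
  have h0 := h (f.comp (LinearMap.proj (0 : Fin 1)))
  calc f m = (f.comp (LinearMap.proj (0 : Fin 1))) (fun _ => m) := rfl
    _ = 0 := by rw [h0]; rfl

/-- A Schurian (finite-length) `Λ`-module `M` forms a forward
hom-orthogonal sequence of length 1 if and only if `M` is simple. -/
theorem stmt_6 (M : ModuleCat.{0} Λ) (hFL : IsFiniteLength Λ M)
    (hSchur : Schurian Λ M) :
    ForwardHomOrthogonal Λ 1 (fun _ => M) ↔ IsSimpleModule Λ M := by
  have hMnt : Nontrivial M := hSchur.1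
  constructor
  · rintro ⟨-, -, -, h4⟩
    by_contra hns
    obtain ⟨N, hN⟩ := aux_exists_coatom Λ M hFL
    have hSsimple : IsSimpleModule Λ (M ⧸ N) := isSimpleModule_iff_isCoatom.mpr hN
    apply h4
    refine ⟨ModuleCat.of Λ (M ⧸ N), aux_simple_fl Λ _, ?_, ?_, 0, Nat.zero_le 1, ?_⟩
    · exact ⟨IsSimpleModule.nontrivial Λ (M ⧸ N),
        fun f => (f.hom.bijective_or_eq_zero.imp_right fun h => ModuleCat.hom_ext h).symm⟩
    · -- S is in the torsion class of M^1
      intro P hPFL hMP g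
      have hM0 : ∀ f : M →ₗ[Λ] P, f = 0 := fun f => aux_hom_of_pi Λ M P (fun f' => congrArg ModuleCat.Hom.hom (hMP (ModuleCat.ofHom f'))) f
      have hg0 : (g.hom : (M ⧸ N) →ₗ[Λ] P).comp N.mkQ = 0 := hM0 _
      refine ModuleCat.hom_ext (LinearMap.ext fun x => ?_)
      obtain ⟨m, rfl⟩ := N.mkQ_surjective x
      exact DFunLike.congr_fun hg0 m
    · -- insertable at position 0 : Hom(S, M) = 0
      intro i
      refine ⟨fun h => absurd h (Nat.not_lt_zero _), fun _ f => ?_⟩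
      by_contra hf
      have hg : (f.hom : (M ⧸ N) →ₗ[Λ] M).comp N.mkQ ≠ 0 := by
        intro h0
        apply hf
        refine ModuleCat.hom_ext (LinearMap.ext fun x => ?_)
        obtain ⟨m, rfl⟩ := N.mkQ_surjective x
        exact DFunLike.congr_fun h0 m
      rcases hSchur.2 (ModuleCat.ofHom ((f.hom : (M ⧸ N) →ₗ[Λ] M).comp N.mkQ)) with h0 | hbij
      · exact hg (congrArg ModuleCat.Hom.hom h0)
      · have hinj : Function.Injective (N.mkQ) := Function.Injective.of_comp hbij.1
        have hNbot : N = ⊥ := by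
          rw [← N.ker_mkQ, LinearMap.ker_eq_bot]; exact hinj
        exact hns (IsSimpleModule.congr (Submodule.quotEquivOfEqBot N hNbot).symm)
  · intro hsimp
    refine ⟨fun _ => hFL, fun _ => hSchur, fun i j hij f => absurd hij ?_, ?_⟩
    · rw [Subsingleton.elim i j]; exact lt_irrefl j
    rintro ⟨X, hXFL, hXS, hXG, k, hk, hins⟩
    have hXnt : Nontrivial X := hXS.1
    interval_cases k
    · -- Hom(X, M) = 0
      have hXM : ∀ f : X ⟶ M, f = 0 := (hins 0).2 (Nat.le_refl 0)
      obtain ⟨N', hN'⟩ := aux_exists_coatom Λ X hXFL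
      have hS'simple : IsSimpleModule Λ (X ⧸ N') := isSimpleModule_iff_isCoatom.mpr hN'
      by_cases hh : ∃ h : M →ₗ[Λ] (X ⧸ N'), h ≠ 0
      · obtain ⟨h, hh0⟩ := hh
        have hbij : Function.Bijective h := LinearMap.bijective_of_ne_zero hh0
        let e := LinearEquiv.ofBijective h hbij
        have hz : (e.symm.toLinearMap).comp N'.mkQ = 0 :=
          congrArg ModuleCat.Hom.hom (hXM (ModuleCat.ofHom ((e.symm.toLinearMap).comp N'.mkQ)))
        obtain ⟨x, hx⟩ := exists_ne (0 : M)
        apply hx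
        have hsurj : Function.Surjective ((e.symm.toLinearMap).comp N'.mkQ) :=
          e.symm.surjective.comp N'.mkQ_surjective
        obtain ⟨v, hv⟩ := hsurj x
        calc x = ((e.symm.toLinearMap).comp N'.mkQ) v := hv.symm
          _ = 0 := by rw [hz]; rfl
      · push_neg at hh
        haveI := hS'simple
        haveI : Nontrivial (X ⧸ N') := IsSimpleModule.nontrivial Λ (X ⧸ N')
        have hz := hXG (ModuleCat.of Λ (X ⧸ N')) (aux_simple_fl Λ _)
          (fun f => ModuleCat.hom_ext (aux_pi_hom Λ M (X ⧸ N') (fun f' => hh f') f.hom)) (ModuleCat.ofHom N'.mkQ)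
        obtain ⟨x, hx⟩ := exists_ne (0 : X ⧸ N')
        apply hx
        obtain ⟨v, rfl⟩ := N'.mkQ_surjective x
        exact DFunLike.congr_fun (congrArg ModuleCat.Hom.hom hz) v
    · -- Hom(M, X) = 0
      have hMX : ∀ f : M ⟶ X, f = 0 := (hins 0).1 Nat.zero_lt_one
      have hz := hXG X hXFL (fun f => ModuleCat.hom_ext (aux_pi_hom Λ M X
          (fun f' => congrArg ModuleCat.Hom.hom (hMX (ModuleCat.ofHom f'))) f.hom))
        (ModuleCat.ofHom (LinearMap.id : X →ₗ[Λ] X))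
      obtain ⟨x, hx⟩ := exists_ne (0 : X)
      exact hx (DFunLike.congr_fun (congrArg ModuleCat.Hom.hom hz) x)
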